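/- Let S ∈ C([0,T],ℝ) and p > 0. Then S has p-th variation along a sequence of partitions π (in the sense of weak convergence of the discrete measures μⁿ = ∑ δ_{t_j}|S(t_{j+1})-S(t_j)|^p to an atomless measure μ) if and only if there exists a continuous function [S]^p such that for all t ∈ [0,T], ∑_{[t_j,t_{j+1}]∈πₙ, t_j ≤ t} |S(t_{j+1}) - S(t_j)|^p → [S]^p(t); moreover in that case the convergence is uniform in t. -/

import Mathlib

open Filter Topology MeasureTheory

structure PartitionSeq (T : ℝ) where
  N : ℕ → ℕ
  t : ℕ → ℕ → ℝ
  mono : ∀ n, Monotone (t n)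
  first : ∀ n, t n 0 = 0
  last : ∀ n k, N n ≤ k → t n k = T

def oscVanishes (T : ℝ) (π : PartitionSeq T) (S : ℝ → ℝ) : Prop :=
  ∀ ε > 0, ∃ n₀ : ℕ, ∀ n ≥ n₀, ∀ i < π.N n,
    ∀ r ∈ Set.Icc (π.t n i) (π.t n (i + 1)),
      ∀ s ∈ Set.Icc (π.t n i) (π.t n (i + 1)), |S s - S r| ≤ ε

noncomputable def pvarSum (T : ℝ) (π : PartitionSeq T) (S : ℝ → ℝ) (p u : ℝ) (n : ℕ) : ℝ :=
  ∑ i ∈ Finset.range (π.N n),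
    if π.t n i ≤ u then |S (π.t n (i + 1)) - S (π.t n i)| ^ p else 0

/-- Weak convergence of the discrete measures
`μⁿ = ∑_{[t_j,t_{j+1}]∈πₙ} δ_{t_j} |S(t_{j+1}) - S(t_j)|^p` to an atomless finite measure,
tested against bounded continuous functions. -/
def HasWeakPthVariation (T : ℝ) (π : PartitionSeq T) (S : ℝ → ℝ) (p : ℝ) : Prop :=
  ∃ μ : Measure ℝ, IsFiniteMeasure μ ∧ (∀ x : ℝ, μ {x} = 0) ∧
    ∀ g : BoundedContinuousFunction ℝ ℝ,
      Tendsto (fun n => ∑ i ∈ Finset.range (π.N n),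
          g (π.t n i) * |S (π.t n (i + 1)) - S (π.t n i)| ^ p) atTop
        (𝓝 (∫ x, g x ∂μ))

section Aux
variable {T p : ℝ} {π : PartitionSeq T} {S : ℝ → ℝ}

lemma w_nonneg (n i : ℕ) : 0 ≤ |S (π.t n (i+1)) - S (π.t n i)| ^ p :=
  Real.rpow_nonneg (abs_nonneg _) p

lemma t_nonneg (n i : ℕ) : 0 ≤ π.t n i := π.first n ▸ π.mono n (Nat.zero_le i)

lemma t_le_T (hT : 0 < T) (n : ℕ) {i : ℕ} (hi : i ≤ π.N n) : π.t n i ≤ T := by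
  have := π.mono n hi
  rwa [π.last n (π.N n) le_rfl] at this

lemma pvarSum_mono_u (n : ℕ) : Monotone (fun u => pvarSum T π S p u n) := by
  intro u v huv
  refine Finset.sum_le_sum fun i _ => ?_
  by_cases h : π.t n i ≤ u
  · simp [h, h.trans huv]
  · split_ifs with h2
    · exact w_nonneg n i
    · exact le_rfl

lemma pvarSum_nonneg (u : ℝ) (n : ℕ) : 0 ≤ pvarSum T π S p u n :=
  Finset.sum_nonneg fun i _ => by split_ifs; exacts [w_nonneg n i, le_rfl]

lemma pvarSum_T (hT : 0 < T) (n : ℕ) :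
    pvarSum T π S p T n = ∑ i ∈ Finset.range (π.N n), |S (π.t n (i+1)) - S (π.t n i)| ^ p := by
  refine Finset.sum_congr rfl fun i hi => ?_
  rw [if_pos (t_le_T hT n (Finset.mem_range.1 hi).le)]

end Aux

/-- piecewise-linear ramp: 1 on `(-∞, a]`, 0 on `[b, ∞)`. -/
noncomputable def ramp (a b : ℝ) : BoundedContinuousFunction ℝ ℝ :=
  BoundedContinuousFunction.mkOfBound
    ⟨fun x => max 0 (min 1 ((b - x) / (b - a))), by fun_prop⟩ 1
    (by
      intro x y
      rw [Real.dist_eq]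
      have h1 : ∀ z : ℝ, max 0 (min 1 ((b - z) / (b - a))) ≤ 1 :=
        fun z => max_le zero_le_one (min_le_left _ _)
      have h2 : ∀ z : ℝ, 0 ≤ max 0 (min 1 ((b - z) / (b - a))) := fun z => le_max_left _ _
      rw [abs_sub_le_iff]
      constructor
      · simpa using sub_le_sub (h1 x) (h2 y)
      · simpa using sub_le_sub (h1 y) (h2 x))

lemma ramp_nonneg (a b x : ℝ) : 0 ≤ ramp a b x := le_max_left _ _

lemma ramp_le_one (a b x : ℝ) : ramp a b x ≤ 1 := max_le zero_le_one (min_le_left _ _)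

lemma ramp_eq_one {a b x : ℝ} (hab : a < b) (hx : x ≤ a) : ramp a b x = 1 := by
  have h : (1 : ℝ) ≤ (b - x) / (b - a) := (one_le_div (by linarith)).2 (by linarith)
  show max 0 (min 1 ((b - x) / (b - a))) = 1
  rw [min_eq_left h, max_eq_right zero_le_one]

lemma ramp_eq_zero {a b x : ℝ} (hab : a < b) (hx : b ≤ x) : ramp a b x = 0 := by
  have h : (b - x) / (b - a) ≤ 0 := div_nonpos_of_nonpos_of_nonneg (by linarith) (by linarith)
  show max 0 (min 1 ((b - x) / (b - a))) = 0
  rw [max_eq_left ((min_le_right _ _).trans h)]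

lemma integral_ramp_le (a b : ℝ) (hab : a < b) (μ : Measure ℝ) [IsFiniteMeasure μ] :
    ∫ x, ramp a b x ∂μ ≤ (μ (Set.Iic b)).toReal := by
  have h1 : ∫ x, ramp a b x ∂μ ≤ ∫ x, (Set.Iic b).indicator (fun _ => (1:ℝ)) x ∂μ := by
    refine integral_mono ((ramp a b).integrable μ)
      ((integrable_const (1:ℝ)).indicator measurableSet_Iic) fun x => ?_
    by_cases hx : x ≤ b
    · simp [Set.indicator_of_mem, Set.mem_Iic.2 hx, ramp_le_one a b x]
    · push_neg at hx
      simp [Set.indicator_of_notMem, Set.mem_Iic, hx.not_ge, ramp_eq_zero hab hx.le]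
  rw [integral_indicator_const (1:ℝ) measurableSet_Iic] at h1
  simpa [measureReal_def] using h1

lemma le_integral_ramp (a b : ℝ) (hab : a < b) (μ : Measure ℝ) [IsFiniteMeasure μ] :
    (μ (Set.Iic a)).toReal ≤ ∫ x, ramp a b x ∂μ := by
  have h1 : ∫ x, (Set.Iic a).indicator (fun _ => (1:ℝ)) x ∂μ ≤ ∫ x, ramp a b x ∂μ := by
    refine integral_mono ((integrable_const (1:ℝ)).indicator measurableSet_Iic)
      ((ramp a b).integrable μ) fun x => ?_
    by_cases hx : x ≤ a
    · simp [Set.indicator_of_mem, Set.mem_Iic.2 hx, (ramp_eq_one hab hx).ge]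
    · push_neg at hx
      simp [Set.indicator_of_notMem, Set.mem_Iic, hx.not_ge, ramp_nonneg a b x]
  rw [integral_indicator_const (1:ℝ) measurableSet_Iic] at h1
  simpa [measureReal_def] using h1

lemma tendsto_of_abs_sub_le {a : ℕ → ℝ} {L C : ℝ}
    (h : ∀ ε > (0:ℝ), ∀ᶠ n in atTop, |a n - L| ≤ C * ε) :
    Tendsto a atTop (𝓝 L) := by
  rw [Metric.tendsto_atTop]
  intro ε hε
  have hC : 0 < |C| + 1 := by positivity
  have hε' : 0 < ε / (2 * (|C| + 1)) := by positivity
  obtain ⟨N, hN⟩ := eventually_atTop.1 (h _ hε')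
  refine ⟨N, fun n hn => ?_⟩
  have := hN n hn
  rw [Real.dist_eq]
  have h1 : C * (ε / (2 * (|C| + 1))) ≤ |C| * (ε / (2 * (|C| + 1))) :=
    mul_le_mul_of_nonneg_right (le_abs_self C) hε'.le
  have h2 : |C| * (ε / (2 * (|C| + 1))) < ε := by
    rw [mul_div_assoc']
    rw [div_lt_iff₀ (by positivity)]
    nlinarith [abs_nonneg C]
  linarith

lemma cdf_approx (μ : Measure ℝ) [IsFiniteMeasure μ] (hatom : ∀ x : ℝ, μ {x} = 0)
    (u : ℝ) {ε : ℝ} (hε : 0 < ε) :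
    ∃ δ > (0:ℝ), (μ (Set.Iic (u+δ))).toReal ≤ (μ (Set.Iic u)).toReal + ε ∧
      (μ (Set.Iic u)).toReal - ε ≤ (μ (Set.Iic (u-δ))).toReal := by
  have hfin : ∀ s : Set ℝ, μ s ≠ ⊤ := fun s => measure_ne_top μ s
  -- right continuity
  have hr : Tendsto (fun k : ℕ => (μ (Set.Iic (u + 1/(k+1)))).toReal) atTop
      (𝓝 ((μ (Set.Iic u)).toReal)) := by
    have h1 : Tendsto (fun k : ℕ => μ (Set.Iic (u + 1/(k+1)))) atTop
        (𝓝 (μ (⋂ k : ℕ, Set.Iic (u + 1/(k+1))))) := by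
      refine tendsto_measure_iInter_atTop (fun k => measurableSet_Iic.nullMeasurableSet)
        (fun k l hkl => Set.Iic_subset_Iic.2 ?_) ⟨0, hfin _⟩
      have : (1:ℝ)/(l+1) ≤ 1/(k+1) := by
        apply one_div_le_one_div_of_le (by positivity)
        have := (Nat.cast_le (α := ℝ)).2 hkl
        linarith
      linarith
    have h2 : (⋂ k : ℕ, Set.Iic (u + 1/(k+1))) = Set.Iic u := by
      ext x
      simp only [Set.mem_iInter, Set.mem_Iic]
      constructor
      · intro h
        by_contra hx
        push_neg at hx
        obtain ⟨k, hk⟩ := exists_nat_one_div_lt (sub_pos.2 hx)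
        exact absurd (h k) (by push_neg; linarith)
      · intro h k
        have : (0:ℝ) < 1/(k+1) := by positivity
        linarith
    rw [h2] at h1
    exact (ENNReal.tendsto_toReal (hfin _)).comp h1
  -- left continuity
  have hl : Tendsto (fun k : ℕ => (μ (Set.Iic (u - 1/(k+1)))).toReal) atTop
      (𝓝 ((μ (Set.Iic u)).toReal)) := by
    have h1 : Tendsto (fun k : ℕ => μ (Set.Iic (u - 1/(k+1)))) atTop
        (𝓝 (μ (⋃ k : ℕ, Set.Iic (u - 1/(k+1))))) := by
      refine tendsto_measure_iUnion_atTop (fun k l hkl => Set.Iic_subset_Iic.2 ?_)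
      have : (1:ℝ)/(l+1) ≤ 1/(k+1) := by
        apply one_div_le_one_div_of_le (by positivity)
        have := (Nat.cast_le (α := ℝ)).2 hkl
        linarith
      linarith
    have h2 : (⋃ k : ℕ, Set.Iic (u - 1/(k+1))) = Set.Iio u := by
      ext x
      simp only [Set.mem_iUnion, Set.mem_Iic, Set.mem_Iio]
      constructor
      · rintro ⟨k, hk⟩
        have : (0:ℝ) < 1/(k+1) := by positivity
        linarith
      · intro h
        obtain ⟨k, hk⟩ := exists_nat_one_div_lt (sub_pos.2 h)
        exact ⟨k, by linarith⟩
    have h3 : μ (Set.Iio u) = μ (Set.Iic u) := by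
      have : μ (Set.Iic u) ≤ μ (Set.Iio u) + μ {u} := by
        rw [show Set.Iic u = Set.Iio u ∪ {u} by
          ext x; simp [Set.mem_Iio, le_iff_lt_or_eq]]
        exact measure_union_le _ _
      rw [hatom u, add_zero] at this
      exact le_antisymm (measure_mono Set.Iio_subset_Iic_self) this
    rw [h2, h3] at h1
    exact (ENNReal.tendsto_toReal (hfin _)).comp h1
  -- choose k
  have hrk := (hr.eventually (eventually_abs_sub_lt _ hε)).and
    (hl.eventually (eventually_abs_sub_lt _ hε))
  obtain ⟨k, hk1, hk2⟩ := hrk.exists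
  refine ⟨1/(k+1), by positivity, ?_, ?_⟩
  · rw [abs_sub_lt_iff] at hk1; linarith
  · rw [abs_sub_lt_iff] at hk2; linarith

section Forward
variable {T p : ℝ} {π : PartitionSeq T} {S : ℝ → ℝ}

lemma sum_ramp_le (hT : 0 < T) {u δ : ℝ} (hδ : 0 < δ) (n : ℕ) :
    ∑ i ∈ Finset.range (π.N n), ramp (u-δ) u (π.t n i) * |S (π.t n (i+1)) - S (π.t n i)| ^ p
      ≤ pvarSum T π S p u n := by
  refine Finset.sum_le_sum fun i _ => ?_
  by_cases h : π.t n i ≤ u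
  · rw [if_pos h]
    exact mul_le_of_le_one_left (w_nonneg n i) (ramp_le_one _ _ _)
  · push_neg at h
    rw [if_neg h.not_ge, ramp_eq_zero (by linarith) h.le, zero_mul]

lemma le_sum_ramp (hT : 0 < T) {u δ : ℝ} (hδ : 0 < δ) (n : ℕ) :
    pvarSum T π S p u n ≤
      ∑ i ∈ Finset.range (π.N n), ramp u (u+δ) (π.t n i) * |S (π.t n (i+1)) - S (π.t n i)| ^ p := by
  refine Finset.sum_le_sum fun i _ => ?_
  by_cases h : π.t n i ≤ u
  · rw [if_pos h, ramp_eq_one (by linarith) h, one_mul]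
  · push_neg at h
    rw [if_neg h.not_ge]
    exact mul_nonneg (ramp_nonneg _ _ _) (w_nonneg n i)

lemma cdf_monotone (μ : Measure ℝ) [IsFiniteMeasure μ] :
    Monotone (fun u => (μ (Set.Iic u)).toReal) := fun u v huv =>
  ENNReal.toReal_mono (measure_ne_top μ _) (measure_mono (Set.Iic_subset_Iic.2 huv))

lemma cdf_continuous (μ : Measure ℝ) [IsFiniteMeasure μ] (hatom : ∀ x : ℝ, μ {x} = 0) :
    Continuous (fun u => (μ (Set.Iic u)).toReal) := by
  rw [continuous_iff_continuousAt]
  intro u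
  rw [Metric.continuousAt_iff]
  intro ε hε
  obtain ⟨δ, hδ, h1, h2⟩ := cdf_approx μ hatom u (half_pos hε)
  refine ⟨δ, hδ, fun {v} hv => ?_⟩
  rw [Real.dist_eq] at hv ⊢
  rw [abs_sub_lt_iff] at hv
  have hm := cdf_monotone μ (show v ≤ u + δ by linarith)
  have hm' := cdf_monotone μ (show u - δ ≤ v by linarith)
  rw [abs_sub_lt_iff]
  constructor <;> linarith

lemma forward_pointwise (hT : 0 < T) (hp : 0 < p)
    {μ : Measure ℝ} [IsFiniteMeasure μ] (hatom : ∀ x : ℝ, μ {x} = 0)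
    (hconv : ∀ g : BoundedContinuousFunction ℝ ℝ,
      Tendsto (fun n => ∑ i ∈ Finset.range (π.N n),
          g (π.t n i) * |S (π.t n (i + 1)) - S (π.t n i)| ^ p) atTop
        (𝓝 (∫ x, g x ∂μ)))
    (u : ℝ) :
    Tendsto (pvarSum T π S p u) atTop (𝓝 ((μ (Set.Iic u)).toReal)) := by
  set V : ℝ → ℝ := fun u => (μ (Set.Iic u)).toReal with hV
  refine tendsto_of_abs_sub_le (C := 2) fun ε hε => ?_
  obtain ⟨δ, hδ, h1, h2⟩ := cdf_approx μ hatom u hε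
  have hlo := hconv (ramp (u-δ) u)
  have hhi := hconv (ramp u (u+δ))
  have hIlo : V u - ε ≤ ∫ x, ramp (u-δ) u x ∂μ := by
    have := le_integral_ramp (u-δ) u (by linarith) μ
    calc V u - ε ≤ V (u-δ) := h2
    _ ≤ _ := this
  have hIhi : ∫ x, ramp u (u+δ) x ∂μ ≤ V u + ε := by
    have := integral_ramp_le u (u+δ) (by linarith) μ
    calc ∫ x, ramp u (u+δ) x ∂μ ≤ V (u+δ) := this
    _ ≤ V u + ε := h1
  filter_upwards [hlo.eventually (eventually_abs_sub_lt _ hε),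
    hhi.eventually (eventually_abs_sub_lt _ hε)] with n hn1 hn2
  rw [abs_sub_lt_iff] at hn1 hn2
  obtain ⟨ha, hb⟩ := hn1
  obtain ⟨hc, hd⟩ := hn2
  have hs1 := sum_ramp_le (π := π) (S := S) (p := p) (u := u) hT hδ n
  have hs2 := le_sum_ramp (π := π) (S := S) (p := p) (u := u) hT hδ n
  rw [abs_sub_le_iff]
  constructor
  · linarith
  · linarith

end Forward

section Mesh
variable {T : ℝ}

lemma mesh_lemma (hT : 0 < T) {δ : ℝ} (hδ : 0 < δ) :
    ∃ m : ℕ, 1 ≤ m ∧ T / m < δ := by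
  refine ⟨⌈T/δ⌉₊ + 1, le_add_self, ?_⟩
  have h1 : T/δ < (⌈T/δ⌉₊ + 1 : ℝ) := by
    have := Nat.lt_floor_add_one (T/δ)
    calc T/δ ≤ ⌈T/δ⌉₊ := Nat.le_ceil _
    _ < _ := by push_cast; linarith
  have hm : (0:ℝ) < (⌈T/δ⌉₊ + 1 : ℕ) := by positivity
  rw [div_lt_iff₀ hm]
  rw [div_lt_iff₀ hδ] at h1
  push_cast at h1 ⊢
  linarith

lemma mesh_mem (hT : 0 < T) {m k : ℕ} (hm : 1 ≤ m) (hk : k ≤ m) :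
    (k : ℝ) * T / m ∈ Set.Icc 0 T := by
  have hm' : (0:ℝ) < m := by exact_mod_cast hm
  constructor
  · positivity
  · rw [div_le_iff₀ hm']
    have : (k:ℝ) ≤ m := by exact_mod_cast hk
    nlinarith

lemma mesh_succ_sub {m k : ℕ} : ((k+1 : ℕ) : ℝ) * T / m - (k : ℝ) * T / m = T / m := by
  push_cast; ring

lemma mesh_pick (hT : 0 < T) {m : ℕ} (hm : 1 ≤ m) {u : ℝ} (hu : u ∈ Set.Icc 0 T) :
    ∃ k : ℕ, k + 1 ≤ m ∧ (k:ℝ) * T / m ≤ u ∧ u ≤ ((k+1:ℕ):ℝ) * T / m := by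
  have hm' : (0:ℝ) < m := by exact_mod_cast hm
  set y := u * m / T with hy
  have hy0 : 0 ≤ y := by
    have := hu.1
    positivity
  by_cases hc : ⌊y⌋₊ ≤ m - 1
  · refine ⟨⌊y⌋₊, by omega, ?_, ?_⟩
    · have h1 : (⌊y⌋₊ : ℝ) ≤ y := Nat.floor_le hy0
      rw [div_le_iff₀ hm']
      rw [hy, le_div_iff₀ hT] at h1
      nlinarith
    · have h2 : y < ⌊y⌋₊ + 1 := Nat.lt_floor_add_one y
      rw [hy, div_lt_iff₀ hT] at h2
      rw [le_div_iff₀ hm']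
      push_cast
      push_cast at h2
      nlinarith
  · push_neg at hc
    refine ⟨m - 1, by omega, ?_, ?_⟩
    · have h1 : (m:ℝ) - 1 ≤ ⌊y⌋₊ := by
        have : m - 1 < ⌊y⌋₊ := hc
        have := Nat.cast_le (α := ℝ).2 (by omega : m ≤ ⌊y⌋₊)
        push_cast at this ⊢
        linarith
      have h2 : (⌊y⌋₊ : ℝ) ≤ y := Nat.floor_le hy0
      have h3 : ((m-1:ℕ):ℝ) = (m:ℝ) - 1 := by
        have : 1 ≤ m := hm; push_cast [Nat.cast_sub this]; ring
      rw [h3, div_le_iff₀ hm']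
      rw [hy, le_div_iff₀ hT] at h2
      nlinarith
    · have h4 : m - 1 + 1 = m := by omega
      rw [h4]
      have : (m:ℝ) * T / m = T := by field_simp
      rw [this]
      exact hu.2

end Mesh

lemma polya {T : ℝ} (hT : 0 < T) {F : ℕ → ℝ → ℝ} {V : ℝ → ℝ}
    (hFmono : ∀ n, Monotone (F n)) (hVcont : ContinuousOn V (Set.Icc 0 T))
    (hconv : ∀ u ∈ Set.Icc (0:ℝ) T, Tendsto (fun n => F n u) atTop (𝓝 (V u))) :
    TendstoUniformlyOn (fun n u => F n u) V atTop (Set.Icc 0 T) := by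
  have hVmono : MonotoneOn V (Set.Icc 0 T) := fun x hx y hy hxy =>
    le_of_tendsto_of_tendsto' (hconv x hx) (hconv y hy) (fun n => hFmono n hxy)
  rw [Metric.tendstoUniformlyOn_iff]
  intro ε hε
  have hUC := (isCompact_Icc (a := (0:ℝ)) (b := T)).uniformContinuousOn_of_continuous hVcont
  rw [Metric.uniformContinuousOn_iff] at hUC
  obtain ⟨δ, hδ, hUC⟩ := hUC (ε/4) (by linarith)
  obtain ⟨m, hm, hmδ⟩ := mesh_lemma hT hδ
  have hm' : (0:ℝ) < m := by exact_mod_cast hm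
  -- eventually all mesh points are close
  have hev : ∀ᶠ n in atTop, ∀ k ∈ Finset.range (m+1), |F n ((k:ℝ)*T/m) - V ((k:ℝ)*T/m)| < ε/4 := by
    rw [eventually_all_finset]
    intro k hk
    have hkm : k ≤ m := by simpa using Nat.lt_succ_iff.1 (Finset.mem_range.1 hk)
    exact (hconv _ (mesh_mem hT hm hkm)).eventually (eventually_abs_sub_lt _ (by linarith))
  filter_upwards [hev] with n hn
  intro u hu
  obtain ⟨k, hk1, hk2, hk3⟩ := mesh_pick hT hm hu
  have hmemk : (k:ℝ)*T/m ∈ Set.Icc 0 T := mesh_mem hT hm (by omega)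
  have hmemk1 : ((k+1:ℕ):ℝ)*T/m ∈ Set.Icc 0 T := mesh_mem hT hm hk1
  have hVk : |F n ((k:ℝ)*T/m) - V ((k:ℝ)*T/m)| < ε/4 :=
    hn k (Finset.mem_range.2 (by omega))
  have hVk1 : |F n (((k+1:ℕ):ℝ)*T/m) - V (((k+1:ℕ):ℝ)*T/m)| < ε/4 :=
    hn (k+1) (Finset.mem_range.2 (by omega))
  have hVadj : |V ((k:ℝ)*T/m) - V (((k+1:ℕ):ℝ)*T/m)| < ε/4 := by
    have hdist : dist ((k:ℝ)*T/m) (((k+1:ℕ):ℝ)*T/m) < δ := by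
      rw [Real.dist_eq, abs_sub_comm, mesh_succ_sub, abs_of_nonneg (by positivity)]
      exact hmδ
    have := hUC _ hmemk _ hmemk1 hdist
    rw [Real.dist_eq] at this
    exact this
  have hF1 : F n u ≤ F n (((k+1:ℕ):ℝ)*T/m) := hFmono n hk3
  have hF2 : F n ((k:ℝ)*T/m) ≤ F n u := hFmono n hk2
  have hV1 : V u ≤ V (((k+1:ℕ):ℝ)*T/m) := hVmono hu hmemk1 hk3
  have hV2 : V ((k:ℝ)*T/m) ≤ V u := hVmono hmemk hu hk2
  rw [Real.dist_eq]
  rw [abs_sub_lt_iff] at hVk hVk1 hVadj ⊢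
  constructor <;> linarith

section Zero
variable {T p : ℝ} {π : PartitionSeq T} {S : ℝ → ℝ}

lemma pvarSum_zero_tendsto (hT : 0 < T) (hp : 0 < p) (hosc : oscVanishes T π S) :
    Tendsto (pvarSum T π S p 0) atTop (𝓝 0) := by
  rw [Metric.tendsto_atTop]
  intro ε hε
  set η : ℝ := (ε/2) ^ p⁻¹ with hη
  have hη0 : 0 < η := Real.rpow_pos_of_pos (by linarith) _
  have hηp : η ^ p = ε/2 := by
    rw [hη, ← Real.rpow_mul (by linarith), inv_mul_cancel₀ hp.ne', Real.rpow_one]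
  obtain ⟨n₀, hn₀⟩ := hosc η hη0
  refine ⟨n₀, fun n hn => ?_⟩
  rw [Real.dist_eq, sub_zero, abs_of_nonneg (pvarSum_nonneg _ _)]
  have hb : pvarSum T π S p 0 n ≤ ε/2 := by
    unfold pvarSum
    rw [Finset.sum_ite, Finset.sum_const_zero, add_zero]
    set s := Finset.filter (fun i => π.t n i ≤ 0) (Finset.range (π.N n)) with hs
    rcases s.eq_empty_or_nonempty with he | hne
    · rw [he, Finset.sum_empty]; linarith
    · set k := s.max' hne with hk
      have hks : k ∈ s := s.max'_mem hne
      have hkN : k < π.N n := Finset.mem_range.1 (Finset.mem_filter.1 hks).1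
      have hsum : ∑ i ∈ s, |S (π.t n (i+1)) - S (π.t n i)| ^ p
          = |S (π.t n (k+1)) - S (π.t n k)| ^ p := by
        refine Finset.sum_eq_single_of_mem k hks fun i hi hne' => ?_
        have hik : i < k := lt_of_le_of_ne (s.le_max' i hi) hne'
        have h1 : π.t n (i+1) ≤ 0 := by
          have := π.mono n (show i+1 ≤ k by omega)
          have hk0 : π.t n k ≤ 0 := (Finset.mem_filter.1 hks).2
          linarith
        have h2 : π.t n (i+1) = 0 := le_antisymm h1 (t_nonneg n (i+1))
        have hi0 : π.t n i ≤ 0 := by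
          have := Finset.mem_filter.1 hi
          exact this.2
        have h3 : π.t n i = 0 := le_antisymm hi0 (t_nonneg n i)
        rw [h2, h3, sub_self, abs_zero, Real.zero_rpow hp.ne']
      rw [hsum]
      have hosck := hn₀ n hn k hkN (π.t n k) ⟨le_rfl, π.mono n (Nat.le_succ k)⟩
        (π.t n (k+1)) ⟨π.mono n (Nat.le_succ k), le_rfl⟩
      calc |S (π.t n (k+1)) - S (π.t n k)| ^ p ≤ η ^ p :=
            Real.rpow_le_rpow (abs_nonneg _) hosck hp.le
      _ = ε/2 := hηp
  linarith

end Zero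

section Backward
variable {T p : ℝ} {π : PartitionSeq T} {S : ℝ → ℝ}

lemma backward (hT : 0 < T) (hp : 0 < p) (hosc : oscVanishes T π S)
    {V : ℝ → ℝ} (hVcont : ContinuousOn V (Set.Icc 0 T))
    (hconv : ∀ u ∈ Set.Icc (0:ℝ) T, Tendsto (pvarSum T π S p u) atTop (𝓝 (V u))) :
    ∃ μ : Measure ℝ, IsFiniteMeasure μ ∧ (∀ x : ℝ, μ {x} = 0) ∧
    ∀ g : BoundedContinuousFunction ℝ ℝ,
      Tendsto (fun n => ∑ i ∈ Finset.range (π.N n),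
          g (π.t n i) * |S (π.t n (i + 1)) - S (π.t n i)| ^ p) atTop
        (𝓝 (∫ x, g x ∂μ)) := by
  have h0T : (0:ℝ) ∈ Set.Icc (0:ℝ) T := ⟨le_rfl, hT.le⟩
  have hTT : T ∈ Set.Icc (0:ℝ) T := ⟨hT.le, le_rfl⟩
  have hV0 : V 0 = 0 := tendsto_nhds_unique (hconv 0 h0T) (pvarSum_zero_tendsto hT hp hosc)
  have hVmono : MonotoneOn V (Set.Icc 0 T) := fun x hx y hy hxy =>
    le_of_tendsto_of_tendsto' (hconv x hx) (hconv y hy) (fun n => pvarSum_mono_u n hxy)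
  set c : ℝ → ℝ := fun x => max (min x T) 0 with hc
  have hc_mem : ∀ x, c x ∈ Set.Icc (0:ℝ) T := fun x =>
    ⟨le_max_right _ _, max_le (min_le_right _ _) hT.le⟩
  have hc_mono : Monotone c := fun x y hxy => max_le_max (min_le_min_right _ hxy) le_rfl
  have hc_cont : Continuous c := (continuous_id.min continuous_const).max continuous_const
  have hc_id : ∀ x ∈ Set.Icc (0:ℝ) T, c x = x := fun x hx => by
    simp only [hc]; rw [min_eq_left hx.2, max_eq_left hx.1]
  set W : ℝ → ℝ := fun x => V (c x) with hW
  have hWcont : Continuous W := hVcont.comp_continuous hc_cont hc_mem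
  have hWmono : Monotone W := fun x y hxy => hVmono (hc_mem x) (hc_mem y) (hc_mono hxy)
  have hW_neg : ∀ x ≤ (0:ℝ), W x = 0 := fun x hx => by
    have hcx : c x = 0 := le_antisymm (max_le ((min_le_left _ _).trans hx) le_rfl) (le_max_right _ _)
    simp only [hW]; rw [hcx, hV0]
  have hW_big : ∀ x, T ≤ x → W x = V T := fun x hx => by
    have hcx : c x = T := by simp only [hc]; rw [min_eq_right hx, max_eq_left hT.le]
    simp only [hW]; rw [hcx]
  have hW_eq : ∀ x ∈ Set.Icc (0:ℝ) T, W x = V x := fun x hx => by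
    simp only [hW]; rw [hc_id x hx]
  set f : StieltjesFunction ℝ := ⟨W, hWmono, fun x => hWcont.continuousAt.continuousWithinAt⟩ with hf
  have hfW : ∀ x, f x = W x := fun x => rfl
  have hbot : Tendsto f atBot (𝓝 0) := by
    have hev : (fun _ : ℝ => (0:ℝ)) =ᶠ[atBot] f := by
      filter_upwards [eventually_le_atBot (0:ℝ)] with x hx
      exact (hW_neg x hx).symm
    exact tendsto_const_nhds.congr' hev
  have htop : Tendsto f atTop (𝓝 (V T)) := by
    have hev : (fun _ : ℝ => V T) =ᶠ[atTop] f := by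
      filter_upwards [eventually_ge_atTop T] with x hx
      exact (hW_big x hx).symm
    exact tendsto_const_nhds.congr' hev
  set μ : Measure ℝ := f.measure with hμ
  have hμuniv : μ Set.univ = ENNReal.ofReal (V T) := by
    rw [hμ, f.measure_univ hbot htop, sub_zero]
  haveI hfin : IsFiniteMeasure μ := ⟨by rw [hμuniv]; exact ENNReal.ofReal_lt_top⟩
  have hatom : ∀ x : ℝ, μ {x} = 0 := fun x => by
    rw [hμ, f.measure_singleton]
    have hll : Function.leftLim (⇑f) x = f x :=
      leftLim_eq_of_tendsto
        (hWcont.continuousAt.continuousWithinAt : ContinuousWithinAt W (Set.Iio x) x)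
    rw [hll, sub_self, ENNReal.ofReal_zero]
  have hIic : ∀ v : ℝ, μ (Set.Iic v) = ENNReal.ofReal (W v) := fun v => by
    rw [hμ, f.measure_Iic hbot, sub_zero]
  have hWnonneg : ∀ v, 0 ≤ W v := fun v => by
    have h1 : W (min v 0) = 0 := hW_neg _ (min_le_right _ _)
    have h2 := hWmono (min_le_left v 0)
    linarith
  have hIicR : ∀ v : ℝ, (μ (Set.Iic v)).toReal = W v := fun v => by
    rw [hIic v, ENNReal.toReal_ofReal (hWnonneg v)]
  have hVT0 : 0 ≤ V T := by have := hWnonneg T; rwa [hW_eq T hTT] at this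
  refine ⟨μ, hfin, hatom, ?_⟩
  intro g
  refine tendsto_of_abs_sub_le (C := 2 * V T + 2) fun ε hε => ?_
  have hUC := (isCompact_Icc (a := (0:ℝ)) (b := T)).uniformContinuousOn_of_continuous
    g.continuous.continuousOn
  rw [Metric.uniformContinuousOn_iff] at hUC
  obtain ⟨δ, hδ, hUC⟩ := hUC ε hε
  obtain ⟨m, hm, hmδ⟩ := mesh_lemma hT hδ
  have hm' : (0:ℝ) < m := by exact_mod_cast hm
  set U : ℕ → ℝ := fun k => (k:ℝ) * T / m with hU
  have hUmono : Monotone U := fun k l hkl => by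
    simp only [hU]
    have h1 : (k:ℝ) ≤ l := Nat.cast_le.2 hkl
    gcongr
  have hUmem : ∀ k ≤ m, U k ∈ Set.Icc (0:ℝ) T := fun k hk => mesh_mem hT hm hk
  have hUnonneg : ∀ k, 0 ≤ U k := fun k => by simp only [hU]; positivity
  have hUsucc : ∀ k, U (k+1) - U k = T/m := fun k => by
    simp only [hU]; push_cast; ring
  set G : ℝ → ℝ := fun x => g 0 * (if x ≤ 0 then 1 else 0) +
    ∑ k ∈ Finset.range m, g (U k) *
      ((if x ≤ U (k+1) then (1:ℝ) else 0) - (if x ≤ U k then 1 else 0)) with hG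
  -- approximation property
  have hGapprox : ∀ x ∈ Set.Icc (0:ℝ) T, |G x - g x| ≤ ε := by
    intro x hx
    rcases le_or_gt x 0 with hx0 | hx0
    · have hxeq : x = 0 := le_antisymm hx0 hx.1
      subst hxeq
      have hsum0 : ∑ k ∈ Finset.range m, g (U k) *
          ((if (0:ℝ) ≤ U (k+1) then (1:ℝ) else 0) - (if (0:ℝ) ≤ U k then 1 else 0)) = 0 := by
        refine Finset.sum_eq_zero fun k _ => ?_
        rw [if_pos (hUnonneg (k+1)), if_pos (hUnonneg k), sub_self, mul_zero]
      simp only [hG]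
      rw [if_pos le_rfl, hsum0, mul_one, add_zero, sub_self, abs_zero]
      exact hε.le
    · set ck := ⌈x * m / T⌉₊ with hck
      have hy0 : 0 < x * m / T := by positivity
      have hc1 : 1 ≤ ck := Nat.one_le_ceil_iff.2 hy0
      have hcm : ck ≤ m := by
        rw [hck, Nat.ceil_le, div_le_iff₀ hT]
        have h2 : x ≤ T := hx.2
        nlinarith
      set k := ck - 1 with hk
      have hkk : k + 1 = ck := by omega
      have hkm' : k < m := by omega
      have hUk_lt : U k < x := by
        have h2 : (ck:ℝ) < x*m/T + 1 := by
          have := Nat.ceil_lt_add_one hy0.le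
          rw [← hck] at this
          exact this
        have h3 : ((k:ℕ):ℝ) = (ck:ℝ) - 1 := by
          rw [hk, Nat.cast_sub hc1]; norm_num
        have h4 : ((ck:ℝ) - 1) * T < x * m := by
          have h5 : (ck:ℝ) - 1 < x*m/T := by linarith
          rw [lt_div_iff₀ hT] at h5
          exact h5
        simp only [hU]
        rw [div_lt_iff₀ hm', h3]
        exact h4
      have hUk1_ge : x ≤ U (k+1) := by
        have hU1 : U (k+1) = (ck:ℝ)*T/m := by
          simp only [hU]; rw [hkk]
        rw [hU1, le_div_iff₀ hm']
        have h5 : x*m/T ≤ (ck:ℝ) := by rw [hck]; exact Nat.le_ceil _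
        rw [div_le_iff₀ hT] at h5
        linarith
      have hsum : ∑ k' ∈ Finset.range m, g (U k') *
          ((if x ≤ U (k'+1) then (1:ℝ) else 0) - (if x ≤ U k' then 1 else 0)) = g (U k) := by
        rw [Finset.sum_eq_single_of_mem k (Finset.mem_range.2 hkm')]
        · rw [if_pos hUk1_ge, if_neg (not_le.2 hUk_lt)]; ring
        · intro k' _ hne
          rcases lt_or_gt_of_ne hne with h | h
          · have h1 : U (k'+1) ≤ U k := hUmono (by omega)
            have h2 : U k' ≤ U k := hUmono (by omega : k' ≤ k)
            rw [if_neg (by linarith : ¬ x ≤ U (k'+1)), if_neg (by linarith : ¬ x ≤ U k'),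
              sub_self, mul_zero]
          · have h1 : U (k+1) ≤ U k' := hUmono (by omega)
            have h2 : U (k+1) ≤ U (k'+1) := hUmono (by omega)
            rw [if_pos (by linarith), if_pos (by linarith), sub_self, mul_zero]
      simp only [hG]
      rw [if_neg (not_le.2 hx0), mul_zero, zero_add, hsum]
      have hUk_mem : U k ∈ Set.Icc (0:ℝ) T := hUmem k (by omega)
      have hdist : dist (U k) x < δ := by
        rw [Real.dist_eq, abs_sub_comm, abs_of_nonneg (by linarith : (0:ℝ) ≤ x - U k)]
        have h6 := hUsucc k
        linarith
      have h7 := hUC _ hUk_mem _ hx hdist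
      rw [Real.dist_eq] at h7
      exact h7.le
  -- sum identity
  have key : ∀ v : ℝ, ∀ n, ∑ i ∈ Finset.range (π.N n),
      (if π.t n i ≤ v then (1:ℝ) else 0) * |S (π.t n (i+1)) - S (π.t n i)| ^ p
      = pvarSum T π S p v n := by
    intro v n
    unfold pvarSum
    refine Finset.sum_congr rfl fun i _ => ?_
    split_ifs <;> simp
  have hBn : ∀ n, ∑ i ∈ Finset.range (π.N n), G (π.t n i) * |S (π.t n (i + 1)) - S (π.t n i)| ^ p
      = g 0 * pvarSum T π S p 0 n + ∑ k ∈ Finset.range m,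
          g (U k) * (pvarSum T π S p (U (k+1)) n - pvarSum T π S p (U k) n) := by
    intro n
    have hterm : ∀ k, g (U k) * (pvarSum T π S p (U (k+1)) n - pvarSum T π S p (U k) n)
        = ∑ i ∈ Finset.range (π.N n), g (U k) *
            (((if π.t n i ≤ U (k+1) then (1:ℝ) else 0) - (if π.t n i ≤ U k then (1:ℝ) else 0))
              * |S (π.t n (i + 1)) - S (π.t n i)| ^ p) := by
      intro k
      rw [← key (U (k+1)) n, ← key (U k) n, ← Finset.sum_sub_distrib, Finset.mul_sum]
      exact Finset.sum_congr rfl fun i _ => by ring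
    have hzero : g 0 * pvarSum T π S p 0 n = ∑ i ∈ Finset.range (π.N n),
        g 0 * ((if π.t n i ≤ 0 then (1:ℝ) else 0) * |S (π.t n (i + 1)) - S (π.t n i)| ^ p) := by
      rw [← key 0 n, Finset.mul_sum]
    rw [hzero]
    simp only [hterm]
    rw [Finset.sum_comm, ← Finset.sum_add_distrib]
    refine Finset.sum_congr rfl fun i _ => ?_
    simp only [hG]
    rw [add_mul, Finset.sum_mul, mul_assoc]
    congr 1
    exact Finset.sum_congr rfl fun k _ => mul_assoc _ _ _
  -- integral of G
  have hInd : ∀ v : ℝ, (fun x => if x ≤ v then (1:ℝ) else 0)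
      = (Set.Iic v).indicator (fun _ => (1:ℝ)) := by
    intro v; funext x; simp [Set.indicator_apply, Set.mem_Iic]
  have hIndInt : ∀ v : ℝ, Integrable (fun x => if x ≤ v then (1:ℝ) else 0) μ := fun v => by
    rw [hInd v]; exact (integrable_const (1:ℝ)).indicator measurableSet_Iic
  have hIndIntegral : ∀ v : ℝ, ∫ x, (if x ≤ v then (1:ℝ) else 0) ∂μ = (μ (Set.Iic v)).toReal := by
    intro v
    rw [hInd v, integral_indicator_const (1:ℝ) measurableSet_Iic]; simp [measureReal_def]
  have hpiece : ∀ k, Integrable (fun x => g (U k) *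
      ((if x ≤ U (k+1) then (1:ℝ) else 0) - (if x ≤ U k then 1 else 0))) μ := by
    intro k
    have h1 : Integrable (fun x => (if x ≤ U (k+1) then (1:ℝ) else 0)
        - (if x ≤ U k then (1:ℝ) else 0)) μ := by
      have := (hIndInt (U (k+1))).sub (hIndInt (U k))
      exact this
    exact h1.const_mul _
  have hhead : Integrable (fun x => g 0 * (if x ≤ (0:ℝ) then (1:ℝ) else 0)) μ :=
    (hIndInt 0).const_mul _
  have hGint : Integrable G μ := by
    rw [hG]
    exact hhead.add (integrable_finset_sum _ fun k _ => hpiece k)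
  have hGintegral : ∫ x, G x ∂μ = g 0 * V 0 + ∑ k ∈ Finset.range m,
      g (U k) * (V (U (k+1)) - V (U k)) := by
    rw [hG]
    rw [integral_add hhead (integrable_finset_sum _ fun k _ => hpiece k)]
    rw [integral_const_mul, hIndIntegral, hIicR, hW_neg 0 le_rfl, hV0]
    congr 1
    rw [integral_finset_sum _ fun k _ => hpiece k]
    refine Finset.sum_congr rfl fun k hk => ?_
    have hkm : k < m := Finset.mem_range.1 hk
    rw [integral_const_mul, integral_sub (hIndInt _) (hIndInt _), hIndIntegral, hIndIntegral,
      hIicR, hIicR, hW_eq _ (hUmem (k+1) hkm), hW_eq _ (hUmem k hkm.le)]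
  -- limit of Riemann sums
  set B : ℕ → ℝ := fun n => g 0 * pvarSum T π S p 0 n + ∑ k ∈ Finset.range m,
      g (U k) * (pvarSum T π S p (U (k+1)) n - pvarSum T π S p (U k) n) with hB
  have hBlim : Tendsto B atTop (𝓝 (∫ x, G x ∂μ)) := by
    rw [hGintegral]
    apply Tendsto.add
    · exact (hconv 0 h0T).const_mul _
    · exact tendsto_finset_sum _ fun k hk =>
        (((hconv _ (hUmem (k+1) (Finset.mem_range.1 hk))).sub
          (hconv _ (hUmem k (Finset.mem_range.1 hk).le))).const_mul _)
  -- a.e. bound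
  have hIio0 : μ (Set.Iio 0) = 0 := by
    have h1 : μ (Set.Iio 0) ≤ μ (Set.Iic 0) := measure_mono Set.Iio_subset_Iic_self
    rw [hIic 0, hW_neg 0 le_rfl, ENNReal.ofReal_zero] at h1
    exact le_antisymm h1 zero_le
  have hIoiT : μ (Set.Ioi T) = 0 := by
    have h1 := measure_compl (measurableSet_Iic (a := T)) (measure_ne_top μ _)
    rw [Set.compl_Iic] at h1
    rw [h1, hμuniv, hIic T, hW_big T le_rfl, tsub_self]
  have hae : ∀ᵐ x ∂μ, ‖G x - g x‖ ≤ ε := by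
    rw [ae_iff]
    refine measure_mono_null (fun x hx => ?_) (measure_union_null hIio0 hIoiT)
    simp only [Set.mem_setOf_eq, not_le] at hx
    by_contra hmem
    simp only [Set.mem_union, Set.mem_Iio, Set.mem_Ioi, not_or, not_lt] at hmem
    have := hGapprox x ⟨hmem.1, hmem.2⟩
    rw [Real.norm_eq_abs] at hx
    linarith
  have hdiff : |∫ x, G x ∂μ - ∫ x, g x ∂μ| ≤ ε * V T := by
    rw [← integral_sub hGint (g.integrable μ)]
    have h1 := norm_integral_le_of_norm_le_const hae
    rw [Real.norm_eq_abs] at h1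
    have huniv : μ.real Set.univ = V T := by rw [measureReal_def, hμuniv, ENNReal.toReal_ofReal hVT0]
    rwa [huniv] at h1
  -- assemble
  filter_upwards [hBlim.eventually (eventually_abs_sub_lt _ hε),
    (hconv T hTT).eventually (eventually_abs_sub_lt _ (by norm_num : (0:ℝ) < 1))] with n hn1 hn2
  have hAB : |(∑ i ∈ Finset.range (π.N n), g (π.t n i) * |S (π.t n (i + 1)) - S (π.t n i)| ^ p)
      - B n| ≤ ε * pvarSum T π S p T n := by
    rw [hB]
    simp only []
    rw [← hBn n, ← Finset.sum_sub_distrib]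
    calc |∑ i ∈ Finset.range (π.N n), (g (π.t n i) * |S (π.t n (i + 1)) - S (π.t n i)| ^ p
            - G (π.t n i) * |S (π.t n (i + 1)) - S (π.t n i)| ^ p)|
        ≤ ∑ i ∈ Finset.range (π.N n), |g (π.t n i) * |S (π.t n (i + 1)) - S (π.t n i)| ^ p
            - G (π.t n i) * |S (π.t n (i + 1)) - S (π.t n i)| ^ p| :=
          Finset.abs_sum_le_sum_abs _ _
      _ ≤ ∑ i ∈ Finset.range (π.N n), ε * |S (π.t n (i + 1)) - S (π.t n i)| ^ p := by
          refine Finset.sum_le_sum fun i hi => ?_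
          rw [← sub_mul, abs_mul, abs_of_nonneg (w_nonneg n i)]
          refine mul_le_mul_of_nonneg_right ?_ (w_nonneg n i)
          rw [abs_sub_comm]
          exact hGapprox _ ⟨t_nonneg n i, t_le_T hT n (Finset.mem_range.1 hi).le⟩
      _ = ε * pvarSum T π S p T n := by rw [← Finset.mul_sum, pvarSum_T hT]
  have hFTb : pvarSum T π S p T n ≤ V T + 1 := by
    rw [abs_sub_lt_iff] at hn2; linarith
  have hAB' : |(∑ i ∈ Finset.range (π.N n), g (π.t n i) * |S (π.t n (i + 1)) - S (π.t n i)| ^ p)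
      - B n| ≤ ε * (V T + 1) :=
    hAB.trans (mul_le_mul_of_nonneg_left hFTb hε.le)
  have htri1 := abs_sub_le (∑ i ∈ Finset.range (π.N n),
      g (π.t n i) * |S (π.t n (i + 1)) - S (π.t n i)| ^ p) (B n) (∫ x, G x ∂μ)
  have htri2 := abs_sub_le (∑ i ∈ Finset.range (π.N n),
      g (π.t n i) * |S (π.t n (i + 1)) - S (π.t n i)| ^ p) (∫ x, G x ∂μ) (∫ x, g x ∂μ)
  rw [abs_sub_lt_iff] at hn1
  have hBG : |B n - ∫ x, G x ∂μ| < ε := abs_sub_lt_iff.2 ⟨hn1.1, hn1.2⟩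
  have hring : ε * (V T + 1) + ε + ε * V T = (2 * V T + 2) * ε := by ring
  have habs1 : |B n - ∫ x, G x ∂μ| ≤ ε := hBG.le
  linarith [hAB', habs1, hdiff, htri1, htri2]

end Backward


/-- `S ∈ V_p(π)` (weak convergence of the discrete measures to an atomless measure) iff the
partial sums of `p`-th powers of increments converge pointwise to a continuous function
`[S]^p`; moreover in that case the convergence is uniform on `[0,T]`. -/
theorem pth_variation_iff_pointwise_and_uniform
    (T p : ℝ) (hT : 0 < T) (hp : 0 < p)
    (π : PartitionSeq T) (S : ℝ → ℝ)
    (hS : ContinuousOn S (Set.Icc 0 T))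
    (hosc : oscVanishes T π S) :
    (HasWeakPthVariation T π S p ↔
      ∃ V : ℝ → ℝ, ContinuousOn V (Set.Icc 0 T) ∧
        ∀ u ∈ Set.Icc (0:ℝ) T, Tendsto (pvarSum T π S p u) atTop (𝓝 (V u))) ∧
    (HasWeakPthVariation T π S p →
      ∃ V : ℝ → ℝ, ContinuousOn V (Set.Icc 0 T) ∧
        TendstoUniformlyOn (fun n u => pvarSum T π S p u n) V atTop (Set.Icc 0 T)) := by
  constructor
  · constructor
    · intro h
      obtain ⟨μ, hfin, hatom, hconv⟩ := h
      haveI := hfin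
      exact ⟨fun u => (μ (Set.Iic u)).toReal, (cdf_continuous μ hatom).continuousOn,
        fun u _ => forward_pointwise hT hp hatom hconv u⟩
    · rintro ⟨V, hVcont, hconv⟩
      exact backward hT hp hosc hVcont hconv
  · intro h
    obtain ⟨μ, hfin, hatom, hconv⟩ := h
    haveI := hfin
    refine ⟨fun u => (μ (Set.Iic u)).toReal, (cdf_continuous μ hatom).continuousOn, ?_⟩
    exact polya hT (fun n => pvarSum_mono_u n) (cdf_continuous μ hatom).continuousOn
      (fun u _ => forward_pointwise hT hp hatom hconv u)
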